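/- Under the same hypotheses as the previous statement but for a point (x,y) ∉ S*_j (so (x,y) ∈ S*_{j'} for some j' ≠ j, meaning F(x,y;θ*_{j'}) ≤ ε, ‖∇F(x,y;θ*_{j'})‖ ≤ ε₁, and F(x,y;θ*_j) ≥ Δ), the soft-min probability satisfies p_{θ₁,…,θ_k}(x,y;θ_j) ≤ e^{-β(Δ - (ε₁ + 2M) c_ini)} / e^{-β(ε + ε₁ c_ini + (M/2) c_ini²)}. -/

import Mathlib

open scoped RealInnerProductSpace

-- 1D derivative of Φ along a line
lemma myLineDeriv {d : ℕ} (Φ : EuclideanSpace ℝ (Fin d) → ℝ)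
    (g : EuclideanSpace ℝ (Fin d) → EuclideanSpace ℝ (Fin d))
    (hgrad : ∀ x, HasGradientAt Φ (g x) x)
    (x v : EuclideanSpace ℝ (Fin d)) (t : ℝ) :
    HasDerivAt (fun s : ℝ => Φ (x + s • v)) ⟪g (x + t • v), v⟫ t := by
  have h1 : HasDerivAt (fun s : ℝ => x + s • v) v t := by
    simpa using ((hasDerivAt_id t).smul_const v).const_add x
  have h2 := (hgrad (x + t • v)).hasFDerivAt.comp_hasDerivAt t h1
  simpa [Function.comp_def] using h2

-- descent lemma
lemma descent {d : ℕ} (Φ : EuclideanSpace ℝ (Fin d) → ℝ)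
    (g : EuclideanSpace ℝ (Fin d) → EuclideanSpace ℝ (Fin d)) (M : ℝ)
    (hgrad : ∀ x, HasGradientAt Φ (g x) x)
    (hLip : ∀ u v, ‖g u - g v‖ ≤ M * ‖u - v‖)
    (x v : EuclideanSpace ℝ (Fin d)) :
    Φ (x + v) ≤ Φ x + ⟪g x, v⟫ + M / 2 * ‖v‖ ^ 2 := by
  set f : ℝ → ℝ := fun t => Φ (x + t • v) - t * ⟪g x, v⟫ - M / 2 * t ^ 2 * ‖v‖ ^ 2 with hf
  have hd : ∀ t : ℝ, HasDerivAt f (⟪g (x + t • v), v⟫ - ⟪g x, v⟫ - M * t * ‖v‖ ^ 2) t := by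
    intro t
    have := ((myLineDeriv Φ g hgrad x v t).sub
        ((hasDerivAt_id t).mul_const ⟪g x, v⟫)).sub
        (((hasDerivAt_pow 2 t).const_mul (M / 2)).mul_const (‖v‖ ^ 2))
    refine this.congr_deriv ?_
    norm_num
    left; ring
  have hanti : AntitoneOn f (Set.Icc 0 1) := by
    apply antitoneOn_of_hasDerivWithinAt_nonpos (convex_Icc 0 1)
      (fun t _ => (hd t).continuousAt.continuousWithinAt)
      (fun t ht => (hd t).hasDerivWithinAt)
    intro t ht
    rw [interior_Icc] at ht
    have h1 : ⟪g (x + t • v), v⟫ - ⟪g x, v⟫ = ⟪g (x + t • v) - g x, v⟫ := by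
      rw [inner_sub_left]
    rw [sub_sub, ← sub_sub, h1]
    have h2 : ⟪g (x + t • v) - g x, v⟫ ≤ M * t * ‖v‖ ^ 2 := by
      calc ⟪g (x + t • v) - g x, v⟫ ≤ ‖g (x + t • v) - g x‖ * ‖v‖ := real_inner_le_norm _ _
        _ ≤ (M * ‖(x + t • v) - x‖) * ‖v‖ := by
            have := hLip (x + t • v) x
            exact mul_le_mul_of_nonneg_right this (norm_nonneg _)
        _ = M * t * ‖v‖ ^ 2 := by
            simp [norm_smul, abs_of_pos ht.1]; ring
    linarith
  have := hanti (Set.mem_Icc.2 ⟨le_refl 0, zero_le_one⟩) (Set.mem_Icc.2 ⟨zero_le_one, le_refl 1⟩) zero_le_one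
  simp only [hf, one_smul, zero_smul, add_zero, one_mul, one_pow, zero_pow, mul_zero, zero_mul, sub_zero, mul_one] at this
  linarith

-- convexity lower bound
lemma convex_lb {d : ℕ} (Φ : EuclideanSpace ℝ (Fin d) → ℝ)
    (g : EuclideanSpace ℝ (Fin d) → EuclideanSpace ℝ (Fin d))
    (hconv : ConvexOn ℝ Set.univ Φ)
    (hgrad : ∀ x, HasGradientAt Φ (g x) x)
    (x v : EuclideanSpace ℝ (Fin d)) :
    Φ x + ⟪g x, v⟫ ≤ Φ (x + v) := by
  set φ : ℝ → ℝ := fun t => Φ (x + t • v) with hφ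
  have hφc : ConvexOn ℝ Set.univ φ := by
    refine ⟨convex_univ, ?_⟩
    intro a _ b _ p q hp hq hpq
    have := hconv.2 (Set.mem_univ (x + a • v)) (Set.mem_univ (x + b • v)) hp hq hpq
    have hx : x + (p * a + q * b) • v = p • (x + a • v) + q • (x + b • v) := by
      have hxx : x = (p + q) • x := by rw [hpq, one_smul]
      nth_rewrite 1 [hxx]; module
    simp only [hφ, smul_eq_mul]
    rw [hx]
    simpa using this
  have h0 := myLineDeriv Φ g hgrad x v 0
  rw [show x + (0:ℝ) • v = x by simp] at h0
  have := hφc.le_slope_of_hasDerivAt (Set.mem_univ (0:ℝ)) (Set.mem_univ (1:ℝ)) zero_lt_one h0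
  rw [slope_def_field] at this
  simp only [hφ, zero_smul, add_zero, one_smul, sub_zero, div_one] at this
  linarith

/-- soft-min probability upper bound for a point outside S*_j. -/
theorem stmt_5 {d : ℕ} (k : ℕ)
    (Φ : EuclideanSpace ℝ (Fin d) → ℝ)
    (g : EuclideanSpace ℝ (Fin d) → EuclideanSpace ℝ (Fin d))
    (M ε ε₁ Δ cini β : ℝ) (hM : 0 ≤ M) (hε₁ : 0 ≤ ε₁) (hβ : 0 ≤ β) (hΔ : 0 < Δ)
    (hconv : ConvexOn ℝ Set.univ Φ)
    (hgrad : ∀ x, HasGradientAt Φ (g x) x)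
    (hLip : ∀ u v, ‖g u - g v‖ ≤ M * ‖u - v‖)
    (θ θs : Fin k → EuclideanSpace ℝ (Fin d)) (j j' : Fin k) (hjj' : j' ≠ j)
    (hFj' : Φ (θs j') ≤ ε) (hgj' : ‖g (θs j')‖ ≤ ε₁)
    (hsepj : Δ ≤ Φ (θs j))
    (hini : ∀ l, ‖θ l - θs l‖ ≤ cini)
    (hdiam : ∀ l, ‖θs l - θs j'‖ ≤ 2) :
    Real.exp (-β * Φ (θ j)) / ∑ l, Real.exp (-β * Φ (θ l)) ≤
      Real.exp (-β * (Δ - (ε₁ + 2 * M) * cini)) /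
        Real.exp (-β * (ε + ε₁ * cini + (M / 2) * cini ^ 2)) := by
  have hcini : (0:ℝ) ≤ cini := le_trans (norm_nonneg _) (hini j)
  -- bound on ‖g (θs j)‖
  have hgj : ‖g (θs j)‖ ≤ ε₁ + 2 * M := by
    calc ‖g (θs j)‖ ≤ ‖g (θs j')‖ + ‖g (θs j) - g (θs j')‖ := by
          have := norm_add_le (g (θs j')) (g (θs j) - g (θs j')); simpa using this
      _ ≤ ε₁ + M * ‖θs j - θs j'‖ := add_le_add hgj' (hLip _ _)
      _ ≤ ε₁ + 2 * M := by
          have := mul_le_mul_of_nonneg_left (hdiam j) hM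
          nlinarith
  -- lower bound on Φ (θ j)
  have hA : Δ - (ε₁ + 2 * M) * cini ≤ Φ (θ j) := by
    have hlb := convex_lb Φ g hconv hgrad (θs j) (θ j - θs j)
    rw [add_sub_cancel] at hlb
    have hip : -((ε₁ + 2 * M) * cini) ≤ ⟪g (θs j), θ j - θs j⟫ := by
      have h1 := abs_real_inner_le_norm (g (θs j)) (θ j - θs j)
      have h2 : ‖g (θs j)‖ * ‖θ j - θs j‖ ≤ (ε₁ + 2 * M) * cini :=
        mul_le_mul hgj (hini j) (norm_nonneg _) (by linarith)
      have := neg_abs_le (⟪g (θs j), θ j - θs j⟫)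
      linarith [abs_nonneg (⟪g (θs j), θ j - θs j⟫)]
    linarith
  -- upper bound on Φ (θ j')
  have hB : Φ (θ j') ≤ ε + ε₁ * cini + (M / 2) * cini ^ 2 := by
    have hub := descent Φ g M hgrad hLip (θs j') (θ j' - θs j')
    rw [add_sub_cancel] at hub
    have hip : ⟪g (θs j'), θ j' - θs j'⟫ ≤ ε₁ * cini := by
      have h1 := real_inner_le_norm (g (θs j')) (θ j' - θs j')
      have h2 : ‖g (θs j')‖ * ‖θ j' - θs j'‖ ≤ ε₁ * cini :=
        mul_le_mul hgj' (hini j') (norm_nonneg _) hε₁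
      linarith
    have h3 : ‖θ j' - θs j'‖ ^ 2 ≤ cini ^ 2 :=
      pow_le_pow_left₀ (norm_nonneg _) (hini j') 2
    nlinarith
  -- combine
  have hnum : Real.exp (-β * Φ (θ j)) ≤ Real.exp (-β * (Δ - (ε₁ + 2 * M) * cini)) :=
    Real.exp_le_exp.2 (by nlinarith)
  have hden : Real.exp (-β * (ε + ε₁ * cini + (M / 2) * cini ^ 2)) ≤
      ∑ l, Real.exp (-β * Φ (θ l)) := by
    calc Real.exp (-β * (ε + ε₁ * cini + (M / 2) * cini ^ 2)) ≤
        Real.exp (-β * Φ (θ j')) := Real.exp_le_exp.2 (by nlinarith)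
      _ ≤ ∑ l, Real.exp (-β * Φ (θ l)) :=
        Finset.single_le_sum (f := fun l => Real.exp (-β * Φ (θ l)))
          (fun i _ => (Real.exp_pos _).le) (Finset.mem_univ j')
  exact div_le_div₀ (Real.exp_pos _).le hnum (Real.exp_pos _) hden
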